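/- Let d_C be the cone distance on [0,∞) × X over a metric space (X,d_X), given by d_C((r₁,x₁),(r₂,x₂))² = r₁² + r₂² − 2 r₁ r₂ cos(min(d_X(x₁,x₂), π)). Fix t > 0, x ∈ X, and 0 < r < min(t,1). Then the minimal distance from the point q = (t,x) to the boundary of the set A(q,r) := {(s,y) : d_X(x,y) < r, t(1−r) < s < t(1+r)} equals t·sin(r). -/
import Mathlib


open Real

set_option maxHeartbeats 1000000 in
theorem stmt_2 {X : Type*} [MetricSpace X]
    (dC : ℝ × X → ℝ × X → ℝ)
    (hnonneg : ∀ p q : ℝ × X, 0 ≤ dC p q)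
    (hlaw : ∀ p q : ℝ × X,
      (dC p q) ^ 2 = p.1 ^ 2 + q.1 ^ 2 - 2 * p.1 * q.1 * Real.cos (min (dist p.2 q.2) π))
    (t r : ℝ) (x : X) (ht : 0 < t) (hr0 : 0 < r) (hr : r < min t 1)
    (hy : ∃ y : X, dist x y = r) :
    sInf ((fun p => dC (t, x) p) ''
        ({p : ℝ × X | (p.1 = t * (1 - r) ∨ p.1 = t * (1 + r)) ∧ dist x p.2 ≤ r} ∪
         {p : ℝ × X | dist x p.2 = r ∧ t * (1 - r) ≤ p.1 ∧ p.1 ≤ t * (1 + r)}))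
      = t * Real.sin r := by
  obtain ⟨y, hyr⟩ := hy
  have hr1 : r < 1 := lt_of_lt_of_le hr (min_le_right _ _)
  have hrpi : r < π := hr1.trans_le (by linarith [Real.pi_gt_three])
  have hsinpos : 0 < Real.sin r := Real.sin_pos_of_pos_of_lt_pi hr0 hrpi
  have hsinle : Real.sin r ≤ r := Real.sin_le hr0.le
  have hv : 0 ≤ t * Real.sin r := by positivity
  have hcosr : Real.cos r ≤ 1 := Real.cos_le_one r
  have hcosr' : 1 - r ≤ Real.cos r := by
    nlinarith [Real.one_sub_sq_div_two_le_cos (x := r)]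
  -- lower bound
  have hlb : ∀ z ∈ ((fun p => dC (t, x) p) ''
        ({p : ℝ × X | (p.1 = t * (1 - r) ∨ p.1 = t * (1 + r)) ∧ dist x p.2 ≤ r} ∪
         {p : ℝ × X | dist x p.2 = r ∧ t * (1 - r) ≤ p.1 ∧ p.1 ≤ t * (1 + r)})),
      t * Real.sin r ≤ z := by
    rintro z ⟨⟨s, y'⟩, hp, rfl⟩
    have hnn := hnonneg (t, x) (s, y')
    have hl := hlaw (t, x) (s, y')
    simp only at hl
    rcases hp with ⟨hs, hd⟩ | ⟨hd, hs1, hs2⟩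
    · -- shell case
      have hmin : min (dist x y') π ≤ min (dist x y') π := le_refl _
      have hc1 : Real.cos (min (dist x y') π) ≤ 1 := Real.cos_le_one _
      have hs' : s = t * (1 - r) ∨ s = t * (1 + r) := hs
      have hs0 : 0 ≤ s := by
        rcases hs' with h | h <;> rw [h] <;> nlinarith
      -- dC² ≥ (s - t)^2 = t² r² ≥ t² sin² r
      have h1 : Real.sin r * Real.sin r ≤ r * r :=
        mul_le_mul hsinle hsinle hsinpos.le hr0.le
      have h2 : t ^ 2 * (Real.sin r * Real.sin r) ≤ t ^ 2 * (r * r) :=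
        mul_le_mul_of_nonneg_left h1 (sq_nonneg t)
      have key : (t * Real.sin r) ^ 2 ≤ (dC (t, x) (s, y')) ^ 2 := by
        rcases hs' with h | h <;> rw [hl, h]
        · nlinarith [mul_le_mul_of_nonneg_left hc1
            (show (0:ℝ) ≤ 2 * t * (t * (1 - r)) by nlinarith), h2]
        · nlinarith [mul_le_mul_of_nonneg_left hc1
            (show (0:ℝ) ≤ 2 * t * (t * (1 + r)) by nlinarith), h2]
      nlinarith
    · -- lateral case
      have hmin : min (dist x y') π = r := by
        rw [hd]; exact min_eq_left hrpi.le
      rw [hmin] at hl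
      have key : (t * Real.sin r) ^ 2 ≤ (dC (t, x) (s, y')) ^ 2 := by
        rw [hl]
        nlinarith [sq_nonneg (s - t * Real.cos r), Real.sin_sq_add_cos_sq r]
      nlinarith
  -- membership: the point (t * cos r, y)
  have hmem : t * Real.sin r ∈ ((fun p => dC (t, x) p) ''
        ({p : ℝ × X | (p.1 = t * (1 - r) ∨ p.1 = t * (1 + r)) ∧ dist x p.2 ≤ r} ∪
         {p : ℝ × X | dist x p.2 = r ∧ t * (1 - r) ≤ p.1 ∧ p.1 ≤ t * (1 + r)})) := by
    refine ⟨(t * Real.cos r, y), Or.inr ⟨hyr, ?_, ?_⟩, ?_⟩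
    · show t * (1 - r) ≤ t * Real.cos r; nlinarith
    · show t * Real.cos r ≤ t * (1 + r); nlinarith
    · have hl := hlaw (t, x) (t * Real.cos r, y)
      simp only at hl
      rw [hyr, min_eq_left hrpi.le] at hl
      have hnn := hnonneg (t, x) (t * Real.cos r, y)
      have : (dC (t, x) (t * Real.cos r, y)) ^ 2 = (t * Real.sin r) ^ 2 := by
        rw [hl]; nlinarith [Real.sin_sq_add_cos_sq r]
      nlinarith
  exact le_antisymm (csInf_le ⟨t * Real.sin r, fun z hz => hlb z hz⟩ hmem)
    (le_csInf ⟨_, hmem⟩ hlb)
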